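/- Let U be a unitary on H_S ⊗ H_E and let γ ⊗ ξ be a product of full-rank density matrices such that U(γ⊗ξ)U† = γ'⊗ξ' for some density matrices γ', ξ'. Then γ' = Tr_E(U(γ⊗ξ)U†) and ξ' is full rank, and writing ξ = Σ_k p_k |e_k⟩⟨e_k|, ξ' = Σ_j p'_j |e'_j⟩⟨e'_j| spectral decompositions, the identity √(p_k) γ^{1/2} ⟨e_k|U†|e'_j⟩ = √(p'_j) ⟨e_k|U†|e'_j⟩ γ'^{1/2} holds for all j, k, where ⟨e_k|U†|e'_j⟩ denotes the partial matrix element (1_S ⊗ ⟨e_k|) U† (1_S ⊗ |e'_j⟩) acting on H_S. -/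

import Mathlib

open scoped ComplexOrder
open Matrix BigOperators Kronecker

noncomputable def ptraceE {dS dE : ℕ} (M : Matrix (Fin dS × Fin dE) (Fin dS × Fin dE) ℂ) :
    Matrix (Fin dS) (Fin dS) ℂ :=
  Matrix.of fun i j => ∑ k, M (i, k) (j, k)

/-- The partial matrix element `(1_S ⊗ ⟨e_k|) U† (1_S ⊗ |e'_j⟩)` as an operator on `H_S`. -/
noncomputable def partialElt {dS dE : ℕ}
    (U : Matrix (Fin dS × Fin dE) (Fin dS × Fin dE) ℂ)
    (e : Fin dE → Fin dE → ℂ) (e' : Fin dE → Fin dE → ℂ) (j k : Fin dE) :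
    Matrix (Fin dS) (Fin dS) ℂ :=
  Matrix.of fun a b => ∑ x, ∑ y, (starRingEnd ℂ) (e k x) * (Uᴴ (a, x) (b, y)) * e' j y

namespace ProdPresAux

/-- The embedding matrix `1_S ⊗ |v⟩`. -/
noncomputable def emb (dS : ℕ) {dE : ℕ} (v : Fin dE → ℂ) :
    Matrix (Fin dS × Fin dE) (Fin dS) ℂ :=
  Matrix.of fun q b => (if q.1 = b then (1 : ℂ) else 0) * v q.2

lemma star_ite' (c : Prop) [Decidable c] (a b : ℂ) :
    star (if c then a else b) = if c then star a else star b := apply_ite star c a b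

lemma partialElt_eq {dS dE : ℕ} (U : Matrix (Fin dS × Fin dE) (Fin dS × Fin dE) ℂ)
    (e : Fin dE → Fin dE → ℂ) (e' : Fin dE → Fin dE → ℂ) (j k : Fin dE) :
    partialElt U e e' j k = (emb dS (e k))ᴴ * Uᴴ * emb dS (e' j) := by
  ext a b
  simp only [partialElt, emb, Matrix.of_apply, Matrix.mul_apply, Matrix.conjTranspose_apply,
    Fintype.sum_prod_type, star_ite', star_one, star_zero, star_mul',
    ite_mul, mul_ite, one_mul, zero_mul, mul_zero, mul_one,
    Finset.sum_ite_eq, Finset.sum_ite_eq', Finset.mem_univ, if_true,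
    Finset.sum_mul, Finset.mul_sum, starRingEnd_apply]
  conv_rhs => rw [Finset.sum_comm]
  simp only [Finset.sum_ite_eq', Finset.mem_univ, if_true]
  conv_rhs => enter [2, y]; rw [Finset.sum_comm]
  simp only [Finset.sum_ite_eq', Finset.mem_univ, if_true]
  rw [Finset.sum_comm]

lemma kron_mul_emb {dS dE : ℕ} (A : Matrix (Fin dS) (Fin dS) ℂ)
    (B : Matrix (Fin dE) (Fin dE) ℂ) (v : Fin dE → ℂ) (μ : ℂ) (hv : B *ᵥ v = μ • v) :
    (A ⊗ₖ B) * emb dS v = μ • (emb dS v * A) := by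
  ext ⟨a, x⟩ b
  have hx := congrFun hv x
  simp only [Matrix.mulVec, dotProduct, Pi.smul_apply, smul_eq_mul] at hx
  simp only [emb, Matrix.of_apply, Matrix.mul_apply, Matrix.smul_apply, kroneckerMap_apply,
    Fintype.sum_prod_type, smul_eq_mul, mul_ite, ite_mul, one_mul, zero_mul, mul_zero, mul_one,
    Finset.sum_ite_eq, Finset.sum_ite_eq', Finset.mem_univ, if_true]
  conv_lhs => rw [Finset.sum_comm]
  simp only [Finset.sum_ite_eq', Finset.mem_univ, if_true]
  have h2 : ∑ z, A a b * B x z * v z = A a b * ∑ z, B x z * v z := by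
    rw [Finset.mul_sum]; exact Finset.sum_congr rfl fun z _ => by ring
  rw [h2, hx]; ring

lemma embH_mul_kron {dS dE : ℕ} (A : Matrix (Fin dS) (Fin dS) ℂ)
    (B : Matrix (Fin dE) (Fin dE) ℂ) (v : Fin dE → ℂ) (μ : ℂ)
    (hv : star v ᵥ* B = μ • star v) :
    (emb dS v)ᴴ * (A ⊗ₖ B) = μ • (A * (emb dS v)ᴴ) := by
  ext a q
  obtain ⟨b, y⟩ := q
  have hy := congrFun hv y
  simp only [Matrix.vecMul, dotProduct, Pi.smul_apply, Pi.star_apply, smul_eq_mul] at hy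
  simp only [emb, Matrix.of_apply, Matrix.mul_apply, Matrix.smul_apply,
    Matrix.conjTranspose_apply, kroneckerMap_apply, Fintype.sum_prod_type, smul_eq_mul,
    star_mul', star_ite', star_one, star_zero, mul_ite, ite_mul, one_mul, zero_mul,
    mul_zero, mul_one, Finset.sum_ite_eq, Finset.sum_ite_eq', Finset.mem_univ, if_true]
  conv_lhs => rw [Finset.sum_comm]
  simp only [Finset.sum_ite_eq, Finset.sum_ite_eq', Finset.mem_univ, if_true]
  have h2 : ∑ z, star (v z) * (A a b * B z y) = A a b * ∑ z, star (v z) * B z y := by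
    rw [Finset.mul_sum]; exact Finset.sum_congr rfl fun z _ => by ring
  rw [h2, hy]; ring

lemma eig_of_dec {dE : ℕ} (p : Fin dE → ℝ) (e : Fin dE → Fin dE → ℂ)
    (he : ∀ k l, star (e k) ⬝ᵥ e l = if k = l then (1 : ℂ) else 0) (k : Fin dE) :
    (∑ l, (p l : ℂ) • Matrix.vecMulVec (e l) (star (e l))) *ᵥ e k = ((p k : ℝ) : ℂ) • e k := by
  funext x
  simp only [Matrix.mulVec, dotProduct, Matrix.sum_apply, Matrix.smul_apply,
    Matrix.vecMulVec_apply, Pi.star_apply, smul_eq_mul, Finset.sum_mul, Pi.smul_apply]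
  rw [Finset.sum_comm]
  have h1 : ∀ l, ∑ z, (p l : ℂ) * (e l x * star (e l z)) * e k z
      = (p l : ℂ) * e l x * (star (e l) ⬝ᵥ e k) := by
    intro l
    simp only [dotProduct, Pi.star_apply, Finset.mul_sum]
    exact Finset.sum_congr rfl fun z _ => by ring
  rw [Finset.sum_congr rfl fun l _ => h1 l]
  simp only [he, mul_ite, mul_one, mul_zero]
  simp [Finset.sum_ite_eq', Finset.mem_univ]

/-- diagonal entries of a PSD matrix are nonnegative -/
lemma diag_nonneg {n : Type*} [Fintype n] [DecidableEq n] {M : Matrix n n ℂ}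
    (hM : M.PosSemidef) (i : n) : 0 ≤ M i i := by
  have := hM.dotProduct_mulVec_nonneg (Pi.single i 1)
  simp only [Matrix.mulVec_single, dotProduct, Pi.star_apply, Pi.single_apply,
    mul_one, star_one, star_zero, ite_mul, one_mul, zero_mul,
    Finset.sum_ite_eq, Finset.sum_ite_eq', Finset.mem_univ, if_true] at this
  simpa [apply_ite (star : ℂ → ℂ)] using this

lemma trace_nonneg {n : Type*} [Fintype n] [DecidableEq n] {M : Matrix n n ℂ}
    (hM : M.PosSemidef) : 0 ≤ M.trace := by
  exact Finset.sum_nonneg fun i _ => diag_nonneg hM i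

lemma eq_zero_of_trace_eq_zero {n : Type*} [Fintype n] [DecidableEq n] {M : Matrix n n ℂ}
    (hM : M.PosSemidef) (h : M.trace = 0) : M = 0 := by
  exact hM.trace_eq_zero_iff.mp h

/-- smul of a PSD matrix by a nonneg real is PSD -/
lemma smul_posSemidef {n : Type*} [Fintype n] {M : Matrix n n ℂ}
    (hM : M.PosSemidef) {r : ℝ} (hr : 0 ≤ r) : ((r : ℂ) • M).PosSemidef := by
  refine Matrix.PosSemidef.of_dotProduct_mulVec_nonneg ?_ ?_
  · have := hM.1
    unfold Matrix.IsHermitian at *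
    rw [Matrix.conjTranspose_smul, this]
    simp [Complex.star_def, Complex.conj_ofReal]
  · intro x
    rw [Matrix.smul_mulVec, dotProduct_smul]
    exact smul_nonneg (by exact_mod_cast Complex.zero_le_real.mpr hr) (hM.dotProduct_mulVec_nonneg x)

open scoped MatrixOrder in
/-- The key abstract intertwining lemma: for positive semidefinite `S, T`,
`S² X = X T²` implies `S X = X T`. -/
lemma intertwine {n : Type*} [Fintype n] [DecidableEq n]
    {S T X : Matrix n n ℂ} (hS : S.PosSemidef) (hT : T.PosSemidef)
    (h : S * S * X = X * (T * T)) : S * X = X * T := by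
  classical
  set D := S * X - X * T with hD
  have hSDDT : S * D + D * T = 0 := by
    have : S * (S * X - X * T) + (S * X - X * T) * T = S * S * X - X * (T * T) := by
      noncomm_ring
    rw [hD, this, h, sub_self]
  have h1 : (Dᴴ * S * D).PosSemidef := hS.conjTranspose_mul_mul_same D
  have h2 : (D * T * Dᴴ).PosSemidef := hT.mul_mul_conjTranspose_same D
  have htr : (Dᴴ * S * D).trace + (D * T * Dᴴ).trace = 0 := by
    have h3 : Dᴴ * S * D + Dᴴ * (D * T) = 0 := by
      calc Dᴴ * S * D + Dᴴ * (D * T) = Dᴴ * (S * D + D * T) := by noncomm_ring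
      _ = 0 := by rw [hSDDT, mul_zero]
    have h4 := congrArg Matrix.trace h3
    rw [Matrix.trace_add, Matrix.trace_zero] at h4
    rw [← h4]
    congr 1
    rw [Matrix.trace_mul_comm Dᴴ (D * T)]
  have e1 : (Dᴴ * S * D).trace = 0 := by
    have n1 := trace_nonneg h1
    have n2 := trace_nonneg h2
    have hle : (Dᴴ * S * D).trace ≤ 0 := by
      rw [eq_neg_of_add_eq_zero_left htr]
      exact neg_nonpos.mpr n2
    exact le_antisymm hle n1
  have e2 : (D * T * Dᴴ).trace = 0 := by
    have := htr
    rw [e1, zero_add] at this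
    exact this
  have z1 : Dᴴ * S * D = 0 := eq_zero_of_trace_eq_zero h1 e1
  have z2 : D * T * Dᴴ = 0 := eq_zero_of_trace_eq_zero h2 e2
  -- derive S * D = 0
  have hRsq : CFC.sqrt S * CFC.sqrt S = S := CFC.sqrt_mul_sqrt_self S hS.nonneg
  have hRH : (CFC.sqrt S)ᴴ = CFC.sqrt S := (CFC.sqrt_nonneg S).posSemidef.isHermitian
  have hSD : S * D = 0 := by
    have hz : (CFC.sqrt S * D)ᴴ * (CFC.sqrt S * D) = 0 := by
      calc (CFC.sqrt S * D)ᴴ * (CFC.sqrt S * D) = Dᴴ * (CFC.sqrt S * CFC.sqrt S) * D := by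
            rw [Matrix.conjTranspose_mul, hRH]; noncomm_ring
      _ = 0 := by rw [hRsq, z1]
    have := Matrix.conjTranspose_mul_self_eq_zero.mp hz
    calc S * D = CFC.sqrt S * (CFC.sqrt S * D) := by rw [← Matrix.mul_assoc, hRsq]
    _ = 0 := by rw [this, Matrix.mul_zero]
  have hR'sq : CFC.sqrt T * CFC.sqrt T = T := CFC.sqrt_mul_sqrt_self T hT.nonneg
  have hR'H : (CFC.sqrt T)ᴴ = CFC.sqrt T := (CFC.sqrt_nonneg T).posSemidef.isHermitian
  have hDT : D * T = 0 := by
    have hz : (D * CFC.sqrt T) * (D * CFC.sqrt T)ᴴ = 0 := by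
      calc (D * CFC.sqrt T) * (D * CFC.sqrt T)ᴴ = D * (CFC.sqrt T * CFC.sqrt T) * Dᴴ := by
            rw [Matrix.conjTranspose_mul, hR'H]; noncomm_ring
      _ = 0 := by rw [hR'sq, z2]
    have := Matrix.self_mul_conjTranspose_eq_zero.mp hz
    calc D * T = (D * CFC.sqrt T) * CFC.sqrt T := by rw [Matrix.mul_assoc, hR'sq]
    _ = 0 := by rw [this, Matrix.zero_mul]
  -- now trace (Dᴴ D) = 0
  have hDH : Dᴴ = Xᴴ * S - T * Xᴴ := by
    rw [hD, Matrix.conjTranspose_sub, Matrix.conjTranspose_mul, Matrix.conjTranspose_mul,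
      hS.isHermitian.eq, hT.isHermitian.eq]
  have htr2 : (Dᴴ * D).trace = 0 := by
    calc (Dᴴ * D).trace = (Xᴴ * (S * D)).trace - (T * (Xᴴ * D)).trace := by
          rw [hDH, Matrix.sub_mul, Matrix.trace_sub, Matrix.mul_assoc, Matrix.mul_assoc]
    _ = 0 - (Xᴴ * (D * T)).trace := by
          rw [hSD, Matrix.mul_zero, Matrix.trace_zero,
            Matrix.trace_mul_comm T (Xᴴ * D), Matrix.mul_assoc]
    _ = 0 := by rw [hDT, Matrix.mul_zero, Matrix.trace_zero, sub_zero]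
  have hDzero : D = 0 := by
    have := eq_zero_of_trace_eq_zero (Matrix.posSemidef_conjTranspose_mul_self D) htr2
    exact Matrix.conjTranspose_mul_self_eq_zero.mp this
  have := sub_eq_zero.mp hDzero
  exact this

end ProdPresAux

open ProdPresAux in
/-- Product preservation: if `U (γ⊗ξ) U† = γ'⊗ξ'` with `γ, ξ` full-rank densities, then
`γ'` is the reduced state, `ξ'` is full rank, and the square-root intertwining identity
`√p_k √γ ⟨e_k|U†|e'_j⟩ = √p'_j ⟨e_k|U†|e'_j⟩ √γ'` holds for all `j, k`. -/
theorem product_preservation_intertwining {dS dE : ℕ}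
    (U : Matrix (Fin dS × Fin dE) (Fin dS × Fin dE) ℂ)
    (hU : U ∈ Matrix.unitaryGroup (Fin dS × Fin dE) ℂ)
    (γ γ' : Matrix (Fin dS) (Fin dS) ℂ) (ξ ξ' : Matrix (Fin dE) (Fin dE) ℂ)
    (hγ : γ.PosDef) (hγtr : γ.trace = 1)
    (hξ : ξ.PosDef) (hξtr : ξ.trace = 1)
    (hγ' : γ'.PosSemidef) (hγ'tr : γ'.trace = 1)
    (hξ' : ξ'.PosSemidef) (hξ'tr : ξ'.trace = 1)
    (hprod : U * (γ ⊗ₖ ξ) * Uᴴ = γ' ⊗ₖ ξ')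
    -- spectral decompositions of ξ and ξ'
    (p : Fin dE → ℝ) (e : Fin dE → Fin dE → ℂ)
    (hp : ∀ k, 0 ≤ p k)
    (he : ∀ k l, star (e k) ⬝ᵥ e l = if k = l then (1 : ℂ) else 0)
    (hξdec : ξ = ∑ k, (p k : ℂ) • Matrix.vecMulVec (e k) (star (e k)))
    (p' : Fin dE → ℝ) (e' : Fin dE → Fin dE → ℂ)
    (hp' : ∀ j, 0 ≤ p' j)
    (he' : ∀ j l, star (e' j) ⬝ᵥ e' l = if j = l then (1 : ℂ) else 0)
    (hξ'dec : ξ' = ∑ j, (p' j : ℂ) • Matrix.vecMulVec (e' j) (star (e' j)))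
    -- positive (semi)definite square roots of γ and γ'
    (sγ sγ' : Matrix (Fin dS) (Fin dS) ℂ)
    (hsγ : sγ.PosDef) (hsγsq : sγ * sγ = γ)
    (hsγ' : sγ'.PosSemidef) (hsγ'sq : sγ' * sγ' = γ') :
    γ' = ptraceE (U * (γ ⊗ₖ ξ) * Uᴴ) ∧
    ξ'.PosDef ∧
    ∀ j k, (Real.sqrt (p k) : ℂ) • (sγ * partialElt U e e' j k) =
      (Real.sqrt (p' j) : ℂ) • (partialElt U e e' j k * sγ') := by
  have hUU : Uᴴ * U = 1 := by
    have := (Matrix.mem_unitaryGroup_iff'.mp hU)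
    simpa [Matrix.star_eq_conjTranspose] using this
  have hUUH : U * Uᴴ = 1 := by
    have := (Matrix.mem_unitaryGroup_iff.mp hU)
    simpa [Matrix.star_eq_conjTranspose] using this
  refine ⟨?_, ?_, ?_⟩
  · -- γ' is the reduced state
    rw [hprod]
    ext i j
    simp only [ptraceE, Matrix.of_apply, kroneckerMap_apply]
    rw [← Finset.mul_sum]
    have : ∑ k, ξ' k k = ξ'.trace := rfl
    rw [this, hξ'tr, mul_one]
  · -- ξ' is positive definite
    have hdS : dS ≠ 0 := by
      intro h
      have : IsEmpty (Fin dS) := h ▸ inferInstanceAs (IsEmpty (Fin 0))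
      rw [Matrix.trace_eq_zero_of_isEmpty γ] at hγtr
      exact zero_ne_one hγtr
    have hdetkron : (γ' ⊗ₖ ξ').det = γ.det ^ Fintype.card (Fin dE) *
        ξ.det ^ Fintype.card (Fin dS) := by
      rw [← hprod]
      rw [Matrix.det_mul, Matrix.det_mul, Matrix.det_kronecker]
      have : U.det * Uᴴ.det = 1 := by rw [← Matrix.det_mul, hUUH, Matrix.det_one]
      calc U.det * (γ.det ^ Fintype.card (Fin dE) * ξ.det ^ Fintype.card (Fin dS)) * Uᴴ.det
          = (U.det * Uᴴ.det) * (γ.det ^ Fintype.card (Fin dE) *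
            ξ.det ^ Fintype.card (Fin dS)) := by ring
      _ = _ := by rw [this, one_mul]
    rw [Matrix.det_kronecker] at hdetkron
    have hne : γ'.det ^ Fintype.card (Fin dE) * ξ'.det ^ Fintype.card (Fin dS) ≠ 0 := by
      rw [hdetkron]
      exact mul_ne_zero (pow_ne_zero _ hγ.det_pos.ne') (pow_ne_zero _ hξ.det_pos.ne')
    have hdet' : ξ'.det ≠ 0 := by
      intro h
      apply hne
      rw [h, zero_pow (by simpa using hdS), mul_zero]
    refine Matrix.PosDef.of_dotProduct_mulVec_pos hξ'.isHermitian fun v hv => ?_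
    have hinj : Function.Injective (ξ'.mulVec) :=
      Matrix.mulVec_injective_iff_isUnit.mpr ((Matrix.isUnit_iff_isUnit_det _).mpr hdet'.isUnit)
    have h0 : ξ' *ᵥ v ≠ 0 := fun hz => hv (hinj (by rw [hz, Matrix.mulVec_zero]))
    rcases (hξ'.dotProduct_mulVec_nonneg v).lt_or_eq with h | h
    · exact h
    · exact absurd ((hξ'.dotProduct_mulVec_zero_iff v).mp h.symm) h0
  · -- the intertwining identity
    intro j k
    have hM : (γ ⊗ₖ ξ) * Uᴴ = Uᴴ * (γ' ⊗ₖ ξ') := by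
      calc (γ ⊗ₖ ξ) * Uᴴ = (Uᴴ * U) * ((γ ⊗ₖ ξ) * Uᴴ) := by rw [hUU, one_mul]
      _ = Uᴴ * (U * (γ ⊗ₖ ξ) * Uᴴ) := by
          rw [Matrix.mul_assoc, ← Matrix.mul_assoc U, Matrix.mul_assoc]
      _ = Uᴴ * (γ' ⊗ₖ ξ') := by rw [hprod]
    -- eigenvector relations
    have hξe : ξ *ᵥ e k = ((p k : ℝ) : ℂ) • e k := by
      rw [hξdec]; exact eig_of_dec p e he k
    have hξ'e : ξ' *ᵥ e' j = ((p' j : ℝ) : ℂ) • e' j := by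
      rw [hξ'dec]; exact eig_of_dec p' e' he' j
    have hξdual : star (e k) ᵥ* ξ = ((p k : ℝ) : ℂ) • star (e k) := by
      have := congrArg star hξe
      rw [Matrix.star_mulVec, star_smul] at this
      rw [← hξ.isHermitian.eq] at this
      simpa [Complex.star_def, Complex.conj_ofReal] using this
    -- key identity
    have hkey : ((p k : ℝ) : ℂ) • (γ * partialElt U e e' j k) =
        ((p' j : ℝ) : ℂ) • (partialElt U e e' j k * γ') := by
      rw [partialElt_eq]
      have h1 : (emb dS (e k))ᴴ * (γ ⊗ₖ ξ) = ((p k : ℝ) : ℂ) • (γ * (emb dS (e k))ᴴ) :=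
        embH_mul_kron γ ξ (e k) _ hξdual
      have h2 : (γ' ⊗ₖ ξ') * emb dS (e' j) = ((p' j : ℝ) : ℂ) • (emb dS (e' j) * γ') :=
        kron_mul_emb γ' ξ' (e' j) _ hξ'e
      calc ((p k : ℝ) : ℂ) • (γ * ((emb dS (e k))ᴴ * Uᴴ * emb dS (e' j)))
          = (((p k : ℝ) : ℂ) • (γ * (emb dS (e k))ᴴ)) * (Uᴴ * emb dS (e' j)) := by
            rw [Matrix.smul_mul, Matrix.mul_assoc, Matrix.mul_assoc]
      _ = ((emb dS (e k))ᴴ * (γ ⊗ₖ ξ)) * (Uᴴ * emb dS (e' j)) := by rw [h1]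
      _ = (emb dS (e k))ᴴ * (((γ ⊗ₖ ξ) * Uᴴ) * emb dS (e' j)) := by
            rw [Matrix.mul_assoc, Matrix.mul_assoc]
      _ = (emb dS (e k))ᴴ * ((Uᴴ * (γ' ⊗ₖ ξ')) * emb dS (e' j)) := by rw [hM]
      _ = ((emb dS (e k))ᴴ * Uᴴ) * ((γ' ⊗ₖ ξ') * emb dS (e' j)) := by
            rw [Matrix.mul_assoc, Matrix.mul_assoc]
      _ = ((emb dS (e k))ᴴ * Uᴴ) * (((p' j : ℝ) : ℂ) • (emb dS (e' j) * γ')) := by rw [h2]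
      _ = ((p' j : ℝ) : ℂ) • ((emb dS (e k))ᴴ * Uᴴ * emb dS (e' j) * γ') := by
            rw [Matrix.mul_smul, Matrix.mul_assoc, Matrix.mul_assoc, Matrix.mul_assoc]
    -- apply the abstract lemma
    set X := partialElt U e e' j k with hX
    set S := ((Real.sqrt (p k) : ℝ) : ℂ) • sγ with hS
    set T := ((Real.sqrt (p' j) : ℝ) : ℂ) • sγ' with hT
    have hSpsd : S.PosSemidef := smul_posSemidef hsγ.posSemidef (Real.sqrt_nonneg _)
    have hTpsd : T.PosSemidef := smul_posSemidef hsγ' (Real.sqrt_nonneg _)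
    have hSS : S * S = ((p k : ℝ) : ℂ) • γ := by
      rw [hS, Matrix.smul_mul, Matrix.mul_smul, smul_smul, hsγsq,
        ← Complex.ofReal_mul, Real.mul_self_sqrt (hp k)]
    have hTT : T * T = ((p' j : ℝ) : ℂ) • γ' := by
      rw [hT, Matrix.smul_mul, Matrix.mul_smul, smul_smul, hsγ'sq,
        ← Complex.ofReal_mul, Real.mul_self_sqrt (hp' j)]
    have hmain : S * S * X = X * (T * T) := by
      rw [hSS, hTT, Matrix.smul_mul, Matrix.mul_smul]
      exact hkey
    have := intertwine hSpsd hTpsd hmain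
    rw [hS, hT, Matrix.smul_mul, Matrix.mul_smul] at this
    exact this
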